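/- In the virtual pure braid group VP_{n+1}, the elements b_{k,n+1-k} = s_{n-1}s_{n-2}⋯s_k ŝ_{k-1} s_{k-2}⋯s_0(λ_{2,1}) pairwise commute: b_{k,n+1-k} b_{l,n+1-l} = b_{l,n+1-l} b_{k,n+1-k} for all 1 ≤ k, l ≤ n. -/
import Mathlib


/-- Index predicate for the generators `λ_{i j}` of the virtual pure braid group
`VP n`: `1 ≤ i, j ≤ n` and `i ≠ j` (1-based indices). -/
def VPIdx (n : ℕ) (p : ℕ × ℕ) : Prop :=
  1 ≤ p.1 ∧ p.1 ≤ n ∧ 1 ≤ p.2 ∧ p.2 ≤ n ∧ p.1 ≠ p.2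

instance (n : ℕ) (p : ℕ × ℕ) : Decidable (VPIdx n p) := by
  unfold VPIdx; infer_instance

/-- Generators `λ_{i j}`, `1 ≤ i ≠ j ≤ n`. -/
def VPGen (n : ℕ) := {p : ℕ × ℕ // VPIdx n p}

/-- The generator `λ_{i j}` as an element of the free group (junk value `1` out of range). -/
def lamW {n : ℕ} (i j : ℕ) : FreeGroup (VPGen n) :=
  if h : VPIdx n (i, j) then FreeGroup.of ⟨(i, j), h⟩ else 1

/-- The defining relations of the virtual pure braid group `VP n`:
`λ_{ij}λ_{kl} = λ_{kl}λ_{ij}` and `λ_{ki}λ_{kj}λ_{ij} = λ_{ij}λ_{kj}λ_{ki}`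
(distinct letters denote distinct indices). -/
def VPRels (n : ℕ) : Set (FreeGroup (VPGen n)) :=
  {w | ∃ i j k l : ℕ, VPIdx n (i, j) ∧ VPIdx n (k, l) ∧ i ≠ k ∧ i ≠ l ∧ j ≠ k ∧ j ≠ l ∧
      w = lamW i j * lamW k l * (lamW k l * lamW i j)⁻¹} ∪
  {w | ∃ i j k : ℕ, VPIdx n (i, j) ∧ VPIdx n (k, i) ∧ VPIdx n (k, j) ∧
      w = lamW k i * lamW k j * lamW i j * (lamW i j * lamW k j * lamW k i)⁻¹}

/-- The virtual pure braid group on `n` strands. -/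
abbrev VP (n : ℕ) := PresentedGroup (VPRels n)

/-- The generator `λ_{i j}` of `VP n` (junk value `1` out of range). -/
def lam' {n : ℕ} (i j : ℕ) : VP n :=
  if h : VPIdx n (i, j) then PresentedGroup.of ⟨(i, j), h⟩ else 1

/-- The product `λ_{1 l} λ_{2 l} ⋯ λ_{k-1, l}`. -/
def conjA {n : ℕ} (k l : ℕ) : VP n :=
  ((List.range (k - 1)).map fun j => lam' (j + 1) l).prod

/-- The product `λ_{l 1}⁻¹ λ_{l 2}⁻¹ ⋯ λ_{l, k-1}⁻¹`. -/
def conjB {n : ℕ} (k l : ℕ) : VP n :=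
  ((List.range (k - 1)).map fun j => (lam' l (j + 1))⁻¹).prod

/-- `s` is the family of degeneracy (strand-doubling) homomorphisms
`s_i : VP m → VP (m+1)` (`0 ≤ i ≤ m-1`), acting on the generators by the explicit
cabling formulas of Proposition 3.1 of Bardakov–Mikhailov–Wu. -/
def IsCabling (s : ∀ m : ℕ, ℕ → (VP m →* VP (m + 1))) : Prop :=
  ∀ m k l i : ℕ, 1 ≤ k → k < l → l ≤ m → i < m →
    (s m i (lam' k l) =
      if i + 1 < k then lam' (k + 1) (l + 1)
      else if i + 1 = k then lam' k (l + 1) * lam' (k + 1) (l + 1)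
      else if i + 1 < l then lam' k (l + 1)
      else if i + 1 = l then (conjA k l)⁻¹ * lam' k (l + 1) * conjA k l * lam' k l
      else lam' k l) ∧
    (s m i (lam' l k) =
      if i + 1 < k then lam' (l + 1) (k + 1)
      else if i + 1 = k then lam' (l + 1) (k + 1) * lam' (l + 1) k
      else if i + 1 < l then lam' (l + 1) k
      else if i + 1 = l then lam' l k * ((conjB k l)⁻¹ * lam' (l + 1) k * conjB k l)
      else lam' l k)

/-- `d` is the family of face (strand-deleting) homomorphisms
`d_i : VP (m+1) → VP m` (`0 ≤ i ≤ m`), acting on the generators by the formulas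
of Proposition 3.1 of Bardakov–Mikhailov–Wu. -/
def IsFace (d : ∀ m : ℕ, ℕ → (VP (m + 1) →* VP m)) : Prop :=
  ∀ m k l i : ℕ, 1 ≤ k → k < l → l ≤ m + 1 → i ≤ m →
    (d m i (lam' k l) =
      if i + 1 < k then lam' (k - 1) (l - 1)
      else if i + 1 = k then 1
      else if i + 1 < l then lam' k (l - 1)
      else if i + 1 = l then 1
      else lam' k l) ∧
    (d m i (lam' l k) =
      if i + 1 < k then lam' (l - 1) (k - 1)
      else if i + 1 = k then 1
      else if i + 1 < l then lam' (l - 1) k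
      else if i + 1 = l then 1
      else lam' l k)

/-- `ι` is the family of trivial-strand inclusions `VP m → VP (m+1)`, `λ_{ij} ↦ λ_{ij}`. -/
def IsIncl (ι : ∀ m : ℕ, VP m →* VP (m + 1)) : Prop :=
  ∀ m i j : ℕ, VPIdx m (i, j) → ι m (lam' i j) = lam' i j

/-- Iterated trivial-strand inclusion `VP p → VP (p + q)`. -/
def iotaIter (ι : ∀ m : ℕ, VP m →* VP (m + 1)) (p : ℕ) : (q : ℕ) → (VP p →* VP (p + q))
  | 0 => MonoidHom.id (VP p)
  | q + 1 => (ι (p + q)).comp (iotaIter ι p q)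

/-- The composite `s_{m} s_{m-1} ⋯ s_{skip+1} ŝ_{skip} s_{skip-1} ⋯ s_0 : VP 2 → VP (m+2)`
of `m` degeneracies with the index `skip` omitted. -/
def chain (s : ∀ m : ℕ, ℕ → (VP m →* VP (m + 1))) (skip : ℕ) :
    (m : ℕ) → (VP 2 →* VP (m + 2))
  | 0 => MonoidHom.id (VP 2)
  | m + 1 => (s (m + 2) (if skip ≤ m then m + 1 else m)).comp (chain s skip m)

/-- The cabled element `a_{k, n+2-k} = s_{n+1-1}⋯s_k ŝ_{k-1} s_{k-2}⋯s_0(λ_{1,2}) ∈ VP (n+2)`. -/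
def aa (s : ∀ m : ℕ, ℕ → (VP m →* VP (m + 1))) (n k : ℕ) : VP (n + 2) :=
  chain s (k - 1) n (lam' 1 2)

/-- The cabled element `b_{k, n+2-k} = s_{n+1-1}⋯s_k ŝ_{k-1} s_{k-2}⋯s_0(λ_{2,1}) ∈ VP (n+2)`. -/
def bb (s : ∀ m : ℕ, ℕ → (VP m →* VP (m + 1))) (n k : ℕ) : VP (n + 2) :=
  chain s (k - 1) n (lam' 2 1)

/-- The simplicial subgroups `T_m ≤ VP (m+1)`:
`T_0 = 1`, `T_1 = VP 2`, `T_{m+2} = ⟨s_0(T_{m+1}), …, s_{m+1}(T_{m+1})⟩`. -/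
def TT (s : ∀ m : ℕ, ℕ → (VP m →* VP (m + 1))) : (m : ℕ) → Subgroup (VP (m + 1))
  | 0 => ⊥
  | 1 => ⊤
  | m + 2 => ⨆ i ∈ Finset.range (m + 2), Subgroup.map (s (m + 2) i) (TT s (m + 1))

/-! ### Auxiliary development for `bb_comm` -/

section Aux

/-- `Rr j k = λ_{j,k} λ_{j,k-1} ⋯ λ_{j,1}`. -/
def Rr {m : ℕ} (j : ℕ) : ℕ → VP m
  | 0 => 1
  | k + 1 => lam' j (k + 1) * Rr j k

/-- `Bc k c = R_{k+1,k} R_{k+2,k} ⋯ R_{k+c,k}`. -/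
def Bc {m : ℕ} (k : ℕ) : ℕ → VP m
  | 0 => 1
  | c + 1 => Bc k c * Rr (k + 1 + c) k

lemma Rr_zero {m : ℕ} (j : ℕ) : (Rr j 0 : VP m) = 1 := rfl

lemma Rr_succ {m : ℕ} (j k : ℕ) : (Rr j (k + 1) : VP m) = lam' j (k + 1) * Rr j k := rfl

lemma Bc_zero {m : ℕ} (k : ℕ) : (Bc k 0 : VP m) = 1 := rfl

lemma Bc_succ {m : ℕ} (k c : ℕ) : (Bc k (c + 1) : VP m) = Bc k c * Rr (k + 1 + c) k := rfl

lemma Bc_one {m : ℕ} (k : ℕ) : (Bc k 1 : VP m) = Rr (k + 1) k := by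
  rw [Bc_succ, Bc_zero, one_mul]

lemma mk_lamW {n : ℕ} (i j : ℕ) :
    PresentedGroup.mk (VPRels n) (lamW i j) = lam' i j := by
  unfold lamW lam'
  split
  · rfl
  · exact map_one _

lemma rel_eq_one {n : ℕ} {w : FreeGroup (VPGen n)} (hw : w ∈ VPRels n) :
    PresentedGroup.mk (VPRels n) w = 1 :=
  (QuotientGroup.eq_one_iff _).mpr (Subgroup.subset_normalClosure hw)

/-- The mixed relation `λ_{ki} λ_{kj} λ_{ij} = λ_{ij} λ_{kj} λ_{ki}`. -/
lemma rel_mixed {n i j k : ℕ} (h1 : VPIdx n (i, j)) (h2 : VPIdx n (k, i))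
    (h3 : VPIdx n (k, j)) :
    (lam' k i * lam' k j * lam' i j : VP n) = lam' i j * lam' k j * lam' k i := by
  have hw : (lamW k i * lamW k j * lamW i j * (lamW i j * lamW k j * lamW k i)⁻¹ :
      FreeGroup (VPGen n)) ∈ VPRels n := Or.inr ⟨i, j, k, h1, h2, h3, rfl⟩
  have h := rel_eq_one hw
  simp only [map_mul, map_inv, mk_lamW] at h
  exact mul_inv_eq_one.mp h

lemma conjB_succ_eq {n : ℕ} (l k : ℕ) : (conjB (k + 1) l : VP n) = (Rr l k)⁻¹ := by
  induction k with
  | zero => simp [conjB, Rr_zero]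
  | succ k ih =>
      have h1 : (conjB (k + 1 + 1) l : VP n)
          = ((List.range (k + 1)).map fun j => (lam' l (j + 1))⁻¹).prod := rfl
      have h2 : (conjB (k + 1) l : VP n)
          = ((List.range k).map fun j => (lam' l (j + 1))⁻¹).prod := rfl
      rw [h1, List.range_succ, List.map_append, List.prod_append, ← h2, ih,
        Rr_succ, mul_inv_rev]
      simp

lemma base_comm : (Bc 1 2 : VP 3) * Bc 2 1 = Bc 2 1 * Bc 1 2 := by
  have e1 : (Bc 1 2 : VP 3) = lam' 2 1 * lam' 3 1 := by
    show ((1 : VP 3) * (lam' 2 1 * 1)) * (lam' 3 1 * 1) = _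
    group
  have e2 : (Bc 2 1 : VP 3) = lam' 3 2 * lam' 3 1 := by
    show (1 : VP 3) * (lam' 3 2 * (lam' 3 1 * 1)) = _
    group
  have h : (lam' 3 2 * lam' 3 1 * lam' 2 1 : VP 3) = lam' 2 1 * lam' 3 1 * lam' 3 2 :=
    rel_mixed (by decide) (by decide) (by decide)
  rw [e1, e2]
  calc lam' 2 1 * lam' 3 1 * (lam' 3 2 * lam' 3 1)
      = (lam' 2 1 * lam' 3 1 * lam' 3 2) * lam' 3 1 := by group
    _ = (lam' 3 2 * lam' 3 1 * lam' 2 1) * lam' 3 1 := by rw [← h]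
    _ = lam' 3 2 * lam' 3 1 * (lam' 2 1 * lam' 3 1) := by group

lemma chain_ge (s : ∀ m : ℕ, ℕ → (VP m →* VP (m + 1))) :
    ∀ m a b, m ≤ a → m ≤ b → chain s a m = chain s b m := by
  intro m
  induction m with
  | zero => intros; rfl
  | succ m ih =>
      intro a b ha hb
      show (s (m + 2) (if a ≤ m then m + 1 else m)).comp (chain s a m)
        = (s (m + 2) (if b ≤ m then m + 1 else m)).comp (chain s b m)
      rw [if_neg (by omega), if_neg (by omega), ih a b (by omega) (by omega)]

section hsCases

variable {s : ∀ m : ℕ, ℕ → (VP m →* VP (m + 1))} (hs : IsCabling s)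

include hs

lemma hsA {m k l i : ℕ} (hk : 1 ≤ k) (hkl : k < l) (hlm : l ≤ m) (him : i < m)
    (h : i + 1 < k) : s m i (lam' l k) = lam' (l + 1) (k + 1) := by
  rw [(hs m k l i hk hkl hlm him).2, if_pos h]

lemma hsK {m k l i : ℕ} (hk : 1 ≤ k) (hkl : k < l) (hlm : l ≤ m) (him : i < m)
    (h : i + 1 = k) : s m i (lam' l k) = lam' (l + 1) (k + 1) * lam' (l + 1) k := by
  rw [(hs m k l i hk hkl hlm him).2, if_neg (by omega), if_pos h]

lemma hsM {m k l i : ℕ} (hk : 1 ≤ k) (hkl : k < l) (hlm : l ≤ m) (him : i < m)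
    (h1 : k < i + 1) (h2 : i + 1 < l) : s m i (lam' l k) = lam' (l + 1) k := by
  rw [(hs m k l i hk hkl hlm him).2, if_neg (by omega), if_neg (by omega), if_pos h2]

lemma hsL {m k l i : ℕ} (hkl : k + 1 < l) (hlm : l ≤ m) (him : i < m)
    (h : i + 1 = l) :
    s m i (lam' l (k + 1))
      = lam' l (k + 1) * (Rr l k * lam' (l + 1) (k + 1) * (Rr l k)⁻¹) := by
  rw [(hs m (k + 1) l i (by omega) hkl hlm him).2, if_neg (by omega), if_neg (by omega),
    if_neg (by omega), if_pos h, conjB_succ_eq, inv_inv]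

lemma hsG {m k l i : ℕ} (hk : 1 ≤ k) (hkl : k < l) (hlm : l ≤ m) (him : i < m)
    (h : l < i + 1) : s m i (lam' l k) = lam' l k := by
  rw [(hs m k l i hk hkl hlm him).2, if_neg (by omega), if_neg (by omega),
    if_neg (by omega), if_neg (by omega)]

lemma s_fix_R {m i j : ℕ} (hj : j ≤ i) (him : i < m) :
    ∀ t, t < j → s m i (Rr j t) = Rr j t := by
  intro t
  induction t with
  | zero => intro _; rw [Rr_zero, map_one, Rr_zero]
  | succ t ih =>
      intro ht
      rw [Rr_succ, map_mul, ih (by omega),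
        hsG hs (by omega) ht (by omega) him (by omega), ← Rr_succ]

lemma s_fix_Bc {m i k : ℕ} (him : i < m) :
    ∀ c, k + c ≤ i → s m i (Bc k c) = Bc k c := by
  intro c
  induction c with
  | zero => intro _; rw [Bc_zero, map_one, Bc_zero]
  | succ c ih =>
      intro hc
      rw [Bc_succ, map_mul, ih (by omega), s_fix_R hs (by omega) him k (by omega),
        ← Bc_succ]

lemma s_top_R {m : ℕ} : ∀ k, k < m + 1 →
    s (m + 1) m (Rr (m + 1) k) = Rr (m + 1) k * Rr (m + 2) k := by
  intro k
  induction k with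
  | zero => intro _; simp [Rr_zero]
  | succ k ih =>
      intro hk
      rw [Rr_succ, map_mul, ih (by omega),
        hsL hs (by omega) (le_refl _) (by omega) (by omega), Rr_succ, Rr_succ]
      group

lemma s_top_Bc {m k c : ℕ} (hk : 1 ≤ k) (h : k + c = m) :
    s (m + 1) m (Bc k (c + 1)) = Bc k (c + 2) := by
  have e1 : k + 1 + c = m + 1 := by omega
  rw [Bc_succ, map_mul, s_fix_Bc hs (by omega) c (by omega), e1,
    s_top_R hs k (by omega)]
  rw [show c + 2 = (c + 1) + 1 by rfl, Bc_succ, Bc_succ]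
  rw [show k + 1 + (c + 1) = m + 2 by omega, e1, mul_assoc]

lemma s0_R {m : ℕ} : ∀ k j, 1 ≤ k → k < j → j ≤ m →
    s m 0 (Rr j k) = Rr (j + 1) (k + 1) := by
  intro k
  induction k with
  | zero => omega
  | succ k ih =>
      intro j _ hkj hjm
      rcases Nat.eq_zero_or_pos k with hk0 | hk0
      · subst hk0
        rw [Rr_succ, Rr_zero, mul_one,
          hsK hs (by omega) (by omega) hjm (by omega) rfl,
          Rr_succ, Rr_succ, Rr_zero, mul_one]
      · rw [Rr_succ, map_mul, ih j hk0 (by omega) hjm,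
          hsA hs (by omega) hkj hjm (by omega) (by omega), ← Rr_succ]

lemma s0_Bc {m k : ℕ} (hk : 1 ≤ k) :
    ∀ c, k + c ≤ m → s m 0 (Bc k c) = Bc (k + 1) c := by
  intro c
  induction c with
  | zero => intro _; rw [Bc_zero, map_one, Bc_zero]
  | succ c ih =>
      intro hc
      rw [Bc_succ, map_mul, ih (by omega),
        s0_R hs k (k + 1 + c) hk (by omega) (by omega), Bc_succ]
      congr 2
      omega

lemma s1_B1 {m : ℕ} : ∀ c, 1 ≤ c → c + 1 ≤ m → s m 1 (Bc 1 c) = Bc 1 (c + 1) := by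
  intro c
  induction c with
  | zero => omega
  | succ c ih =>
      intro _ hcm
      rcases Nat.eq_zero_or_pos c with hc0 | hc0
      · subst hc0
        have e1 : (Bc 1 (0 + 1) : VP m) = 1 * (lam' 2 1 * 1) := rfl
        have e2 : (Bc 1 (0 + 1 + 1) : VP (m + 1))
            = 1 * (lam' 2 1 * 1) * (lam' 3 1 * 1) := rfl
        rw [e1, e2]
        simp only [one_mul, mul_one, map_mul, map_one]
        rw [hsL hs (k := 0) (l := 2) (i := 1) (by omega) (by omega) (by omega) rfl,
          Rr_zero]
        group
      · rw [Bc_succ, map_mul, ih hc0 (by omega)]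
        have hR : s m 1 (Rr (1 + 1 + c) 1 : VP m) = Rr (1 + 1 + c + 1) 1 := by
          rw [Rr_succ, Rr_zero, mul_one, Rr_succ, Rr_zero, mul_one,
            hsM hs (by omega) (by omega) (by omega) (by omega) (by omega) (by omega)]
        rw [hR]
        exact (Bc_succ 1 (c + 1)).symm

lemma s1_Rtop {m : ℕ} : ∀ t, 2 ≤ t → t < m → s m 1 (Rr m t) = Rr (m + 1) (t + 1) := by
  intro t
  induction t with
  | zero => omega
  | succ t ih =>
      intro h2 hm
      rcases Nat.lt_or_ge t 2 with ht2 | ht2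
      · have ht1 : t = 1 := by omega
        subst ht1
        rw [Rr_succ, Rr_succ, Rr_zero, mul_one, map_mul,
          hsK hs (by omega) (by omega) (by omega) (by omega) rfl,
          hsM hs (by omega) (by omega) (by omega) (by omega) (by omega) (by omega)]
        rw [Rr_succ, Rr_succ, Rr_succ, Rr_zero]
        group
      · rw [Rr_succ, map_mul, ih ht2 (by omega),
          hsA hs (by omega) hm (by omega) (by omega) (by omega), ← Rr_succ]

lemma s1_Btop {m : ℕ} (h3 : 3 ≤ m) : s m 1 (Bc (m - 1) 1) = Bc m 1 := by
  have e1 : (Bc (m - 1) 1 : VP m) = Rr m (m - 1) := by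
    rw [Bc_succ, Bc_zero, one_mul]
    congr 1
    omega
  have e2 : (Bc m 1 : VP (m + 1)) = Rr (m + 1) m := Bc_one m
  rw [e1, e2, s1_Rtop hs (m - 1) (by omega) (by omega)]
  congr 1
  omega

lemma s_sub_R {m : ℕ} : ∀ t, t ≤ m → s (m + 2) m (Rr (m + 2) t) = Rr (m + 3) t := by
  intro t
  induction t with
  | zero => intro _; rw [Rr_zero, map_one, Rr_zero]
  | succ t ih =>
      intro ht
      rw [Rr_succ, map_mul, ih (by omega),
        hsM hs (by omega) (by omega) (by omega) (by omega) (by omega) (by omega),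
        ← Rr_succ]

lemma s_sub_top {m : ℕ} : s (m + 2) m (Rr (m + 2) (m + 1)) = Rr (m + 3) (m + 2) := by
  rw [Rr_succ, map_mul, s_sub_R hs m le_rfl,
    hsK hs (by omega) (by omega) (by omega) (by omega) rfl,
    show m + 2 = (m + 1) + 1 from rfl, Rr_succ, Rr_succ]
  group

lemma Bcomm : ∀ m k l : ℕ, 1 ≤ k → k < l → l + 1 ≤ m →
    (Bc k (m - k) : VP m) * Bc l (m - l) = Bc l (m - l) * Bc k (m - k) := by
  intro m
  induction m with
  | zero => intro k l h1 h2 h3; omega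
  | succ m IH =>
    intro k l h1 h2 h3
    rcases Nat.lt_or_ge k 2 with hk2 | hk2
    · -- k = 1
      have hk1 : k = 1 := by omega
      subst hk1
      rcases Nat.lt_or_ge l m with hlm | hlm
      · -- l + 1 ≤ m : use the top degeneracy
        obtain ⟨m', rfl⟩ : ∃ m', m = m' + 1 := ⟨m - 1, by omega⟩
        have h := IH 1 l le_rfl h2 (by omega)
        have h' := congrArg (fun x => s (m' + 1) m' x) h
        simp only [map_mul] at h'
        rw [show m' + 1 - 1 = (m' - 1) + 1 by omega,
          show m' + 1 - l = (m' - l) + 1 by omega,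
          s_top_Bc hs (by omega) (by omega), s_top_Bc hs (by omega) (by omega)] at h'
        rw [show m' + 1 + 1 - 1 = (m' - 1) + 2 by omega,
          show m' + 1 + 1 - l = (m' - l) + 2 by omega]
        exact h'
      · have hlm' : l = m := by omega
        rw [hlm']
        rcases Nat.lt_or_ge m 3 with hm3 | hm3
        · -- m = 2 : the base case in VP 3
          have hm2 : m = 2 := by omega
          subst hm2
          rw [show 2 + 1 - 1 = 2 by norm_num, show 2 + 1 - 2 = 1 by norm_num]
          exact base_comm
        · -- m ≥ 3
          have h := IH 1 (m - 1) le_rfl (by omega) (by omega)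
          have h' := congrArg (fun x => s m 1 x) h
          simp only [map_mul] at h'
          rw [show m - (m - 1) = 1 by omega] at h'
          rw [s1_B1 hs (m - 1) (by omega) (by omega), s1_Btop hs hm3,
            show m - 1 + 1 = m by omega] at h'
          rw [show m + 1 - 1 = m by omega, show m + 1 - m = 1 by omega]
          exact h'
    · -- k ≥ 2 : use s_0
      have h := IH (k - 1) (l - 1) (by omega) (by omega) (by omega)
      have h' := congrArg (fun x => s m 0 x) h
      simp only [map_mul] at h'
      rw [s0_Bc hs (by omega) _ (by omega), s0_Bc hs (by omega) _ (by omega)] at h'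
      rw [show k - 1 + 1 = k by omega, show l - 1 + 1 = l by omega,
        show m - (k - 1) = m + 1 - k by omega, show m - (l - 1) = m + 1 - l by omega] at h'
      exact h'

lemma bb_eq : ∀ n k, 1 ≤ k → k ≤ n + 1 → bb s n k = Bc k (n + 2 - k) := by
  intro n
  induction n with
  | zero =>
      intro k h1 h2
      have hk : k = 1 := by omega
      subst hk
      rw [show 0 + 2 - 1 = 1 by norm_num]
      show lam' 2 1 = (Bc 1 1 : VP 2)
      rw [Bc_succ, Bc_zero, one_mul, Rr_succ, Rr_zero, mul_one]
  | succ n ih =>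
      intro k h1 h2
      rcases Nat.lt_or_ge k (n + 2) with hk | hk
      · have hb : bb s (n + 1) k
            = s (n + 2) (if k - 1 ≤ n then n + 1 else n) (bb s n k) := rfl
        rw [hb, if_pos (by omega), ih k h1 (by omega),
          show n + 2 - k = (n + 1 - k) + 1 by omega, s_top_Bc hs h1 (by omega)]
        congr 1
        omega
      · have hk' : k = n + 2 := by omega
        subst hk'
        have hb : bb s (n + 1) (n + 2)
            = s (n + 2) (if n + 2 - 1 ≤ n then n + 1 else n)
                (chain s (n + 2 - 1) n (lam' 2 1)) := rfl
        rw [hb, if_neg (by omega), chain_ge s n (n + 2 - 1) n (by omega) le_rfl]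
        have hbn : chain s n n (lam' 2 1) = bb s n (n + 1) := by
          unfold bb
          rw [chain_ge s n n (n + 1 - 1) le_rfl (by omega)]
        rw [hbn, ih (n + 1) (by omega) le_rfl, show n + 2 - (n + 1) = 1 by omega,
          show n + 1 + 2 - (n + 2) = 1 by omega, Bc_one, Bc_one]
        exact s_sub_top hs

end hsCases

end Aux

/-- (Lemma 1.1, second half.) In `VP (n+2)` (the virtual pure braid
group `VP_{N+1}` with `N = n+1`), the cabled elements
`b_{k, N+1-k} = s_{N-1}⋯s_k ŝ_{k-1} s_{k-2}⋯s_0(λ_{2,1})` pairwise commute for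
`1 ≤ k, l ≤ N`. -/
theorem bb_comm (s : ∀ m : ℕ, ℕ → (VP m →* VP (m + 1))) (hs : IsCabling s)
    (n k l : ℕ) (hk1 : 1 ≤ k) (hk2 : k ≤ n + 1) (hl1 : 1 ≤ l) (hl2 : l ≤ n + 1) :
    bb s n k * bb s n l = bb s n l * bb s n k := by
  rcases lt_trichotomy k l with h | h | h
  · rw [bb_eq hs n k hk1 hk2, bb_eq hs n l hl1 hl2]
    exact Bcomm hs (n + 2) k l hk1 h (by omega)
  · rw [h]
  · rw [bb_eq hs n k hk1 hk2, bb_eq hs n l hl1 hl2]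
    exact (Bcomm hs (n + 2) l k hl1 h (by omega)).symm
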